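/- Let h₁, h₂ : [0,1] → [0,1] be twice continuously differentiable with hᵢ' > 0, hᵢ(0)=0, hᵢ(1)=1, and suppose -h₂''(p)/h₂'(p) ≥ -h₁''(p)/h₁'(p) for all p ∈ (0,1). Then for all p₀ and ε with 0 < ε ≤ min(p₀, 1-p₀) and p₀ < 1, the DT risk premia satisfy ρ₂(p₀,ε) ≥ ρ₁(p₀,ε), where ρᵢ(p₀,ε) = (1/2)·((hᵢ(p₀)-hᵢ(p₀-ε)) - (hᵢ(p₀+ε)-hᵢ(p₀)))/(hᵢ(p₀+ε)-hᵢ(p₀-ε)). -/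

import Mathlib

open Set

/-- Global comparative risk aversion for the DT risk premium. -/
theorem dt_comparative_risk_premium
    (h₁ h₂ : ℝ → ℝ)
    (hC1 : ContDiff ℝ 2 h₁) (hC2 : ContDiff ℝ 2 h₂)
    (hmap1 : MapsTo h₁ (Icc 0 1) (Icc 0 1)) (hmap2 : MapsTo h₂ (Icc 0 1) (Icc 0 1))
    (hd1 : ∀ p ∈ Icc (0:ℝ) 1, 0 < deriv h₁ p)
    (hd2 : ∀ p ∈ Icc (0:ℝ) 1, 0 < deriv h₂ p)
    (h10 : h₁ 0 = 0) (h11 : h₁ 1 = 1) (h20 : h₂ 0 = 0) (h21 : h₂ 1 = 1)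
    (hidx : ∀ p ∈ Ioo (0:ℝ) 1,
      -(deriv (deriv h₂) p) / deriv h₂ p ≥ -(deriv (deriv h₁) p) / deriv h₁ p) :
    ∀ p₀ ε : ℝ, 0 < ε → ε ≤ min p₀ (1 - p₀) → p₀ < 1 →
      (1/2) * ((h₁ p₀ - h₁ (p₀ - ε)) - (h₁ (p₀ + ε) - h₁ p₀)) /
          (h₁ (p₀ + ε) - h₁ (p₀ - ε)) ≤
      (1/2) * ((h₂ p₀ - h₂ (p₀ - ε)) - (h₂ (p₀ + ε) - h₂ p₀)) /
          (h₂ (p₀ + ε) - h₂ (p₀ - ε)) := by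
  intro p₀ ε hε hεle hp₀lt
  have hεp : ε ≤ p₀ := le_trans hεle (min_le_left _ _)
  have hε1 : ε ≤ 1 - p₀ := le_trans hεle (min_le_right _ _)
  have hdiff1 : Differentiable ℝ h₁ := hC1.differentiable (by norm_num)
  have hdiff2 : Differentiable ℝ h₂ := hC2.differentiable (by norm_num)
  have hcd1 : ContDiff ℝ 1 (deriv h₁) :=
    (contDiff_succ_iff_deriv.mp (by norm_num; exact hC1)).2.2
  have hcd2 : ContDiff ℝ 1 (deriv h₂) :=
    (contDiff_succ_iff_deriv.mp (by norm_num; exact hC2)).2.2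
  have hc1 : Continuous (deriv h₁) := hcd1.continuous
  have hc2 : Continuous (deriv h₂) := hcd2.continuous
  have hdd1 : Differentiable ℝ (deriv h₁) := hcd1.differentiable (by norm_num)
  have hdd2 : Differentiable ℝ (deriv h₂) := hcd2.differentiable (by norm_num)
  set g : ℝ → ℝ := fun p => deriv h₂ p / deriv h₁ p with hg
  -- g is antitone on [0,1]
  have hganti : AntitoneOn g (Icc 0 1) := by
    apply antitoneOn_of_deriv_nonpos (convex_Icc 0 1)
    · exact hc2.continuousOn.div hc1.continuousOn (fun x hx => (hd1 x hx).ne')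
    · intro x hx
      rw [interior_Icc] at hx
      exact ((hdd2 x).div (hdd1 x)
        (hd1 x (Ioo_subset_Icc_self hx)).ne').differentiableWithinAt
    · intro x hx
      rw [interior_Icc] at hx
      have hx' := Ioo_subset_Icc_self hx
      have h1x := hd1 x hx'
      have h2x := hd2 x hx'
      have hder : deriv g x =
          (deriv (deriv h₂) x * deriv h₁ x - deriv h₂ x * deriv (deriv h₁) x) /
            (deriv h₁ x) ^ 2 := deriv_div (hdd2 x) (hdd1 x) h1x.ne'
      rw [hder]
      apply div_nonpos_of_nonpos_of_nonneg _ (sq_nonneg _)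
      have hix := hidx x hx
      rw [ge_iff_le, div_le_div_iff₀ h1x h2x] at hix
      nlinarith
  -- strict monotonicity
  have hm1 : StrictMonoOn h₁ (Icc 0 1) :=
    strictMonoOn_of_deriv_pos (convex_Icc 0 1) hdiff1.continuous.continuousOn
      (fun x hx => hd1 x (by rw [interior_Icc] at hx; exact Ioo_subset_Icc_self hx))
  have hm2 : StrictMonoOn h₂ (Icc 0 1) :=
    strictMonoOn_of_deriv_pos (convex_Icc 0 1) hdiff2.continuous.continuousOn
      (fun x hx => hd2 x (by rw [interior_Icc] at hx; exact Ioo_subset_Icc_self hx))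
  have mema : p₀ - ε ∈ Icc (0:ℝ) 1 := ⟨by linarith, by linarith⟩
  have memb : p₀ ∈ Icc (0:ℝ) 1 := ⟨by linarith, by linarith⟩
  have memc : p₀ + ε ∈ Icc (0:ℝ) 1 := ⟨by linarith, by linarith⟩
  have hA1 : 0 < h₁ p₀ - h₁ (p₀ - ε) := sub_pos.mpr (hm1 mema memb (by linarith))
  have hB1 : 0 < h₁ (p₀ + ε) - h₁ p₀ := sub_pos.mpr (hm1 memb memc (by linarith))
  have hA2 : 0 < h₂ p₀ - h₂ (p₀ - ε) := sub_pos.mpr (hm2 mema memb (by linarith))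
  have hB2 : 0 < h₂ (p₀ + ε) - h₂ p₀ := sub_pos.mpr (hm2 memb memc (by linarith))
  set c : ℝ := g p₀ with hcdef
  have hcpos : 0 < c := div_pos (hd2 p₀ memb) (hd1 p₀ memb)
  have ftc : ∀ (h : ℝ → ℝ), Differentiable ℝ h → Continuous (deriv h) →
      ∀ a b : ℝ, h b - h a = ∫ x in a..b, deriv h x := by
    intro h hd hc a b
    rw [intervalIntegral.integral_deriv_eq_sub (fun x _ => hd x)
      (hc.intervalIntegrable a b)]
  -- pointwise bounds and integral comparisons
  have key1 : c * (h₁ p₀ - h₁ (p₀ - ε)) ≤ h₂ p₀ - h₂ (p₀ - ε) := by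
    rw [ftc h₁ hdiff1 hc1, ftc h₂ hdiff2 hc2, ← intervalIntegral.integral_const_mul]
    apply intervalIntegral.integral_mono_on (by linarith)
      ((continuous_const.mul hc1).intervalIntegrable _ _)
      (hc2.intervalIntegrable _ _)
    intro x hx
    have hx01 : x ∈ Icc (0:ℝ) 1 := ⟨by linarith [hx.1], by linarith [hx.2]⟩
    have hgx : c ≤ g x := hganti hx01 memb hx.2
    have h1x := hd1 x hx01
    calc c * deriv h₁ x ≤ g x * deriv h₁ x :=
          mul_le_mul_of_nonneg_right hgx h1x.le
      _ = deriv h₂ x := div_mul_cancel₀ _ h1x.ne'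
  have key2 : h₂ (p₀ + ε) - h₂ p₀ ≤ c * (h₁ (p₀ + ε) - h₁ p₀) := by
    rw [ftc h₁ hdiff1 hc1, ftc h₂ hdiff2 hc2, ← intervalIntegral.integral_const_mul]
    apply intervalIntegral.integral_mono_on (by linarith)
      (hc2.intervalIntegrable _ _)
      ((continuous_const.mul hc1).intervalIntegrable _ _)
    intro x hx
    have hx01 : x ∈ Icc (0:ℝ) 1 := ⟨by linarith [hx.1], by linarith [hx.2]⟩
    have hgx : g x ≤ c := hganti memb hx01 hx.1
    have h1x := hd1 x hx01
    calc deriv h₂ x = g x * deriv h₁ x := (div_mul_cancel₀ _ h1x.ne').symm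
      _ ≤ c * deriv h₁ x := mul_le_mul_of_nonneg_right hgx h1x.le
  -- conclude
  have hD1 : 0 < h₁ (p₀ + ε) - h₁ (p₀ - ε) := by linarith
  have hD2 : 0 < h₂ (p₀ + ε) - h₂ (p₀ - ε) := by linarith
  rw [div_le_div_iff₀ hD1 hD2]
  have hkey : (h₁ p₀ - h₁ (p₀ - ε)) * (h₂ (p₀ + ε) - h₂ p₀) ≤
      (h₂ p₀ - h₂ (p₀ - ε)) * (h₁ (p₀ + ε) - h₁ p₀) := by
    nlinarith [mul_le_mul_of_nonneg_right key1 hB1.le,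
      mul_le_mul_of_nonneg_left key2 hA1.le]
  nlinarith [hkey]
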